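/- arXiv:2509.14845 — 5 statements merged into one kernel-verified Lean document; each statement's English description precedes it below -/
import Mathlib

section
/- For any real numbers y ≥ 0 and b > -1, there exist positive constants c₁, c₂ (depending only on b) such that c₁ · e^y · (y+1)^{-b-1} ≤ ∫₀¹ e^{ys} (1-s)^b ds ≤ c₂ · e^y · (y+1)^{-b-1}. -/
open MeasureTheory Real Set

private lemma intInt (b y c : ℝ) (hb : -1 < b) :
    IntervalIntegrable (fun x => x ^ b * Real.exp (-(y*x))) volume 0 c :=
  (intervalIntegral.intervalIntegrable_rpow' hb).mul_continuousOn
    (Continuous.continuousOn (by continuity))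

private lemma rpow_int_val (b c : ℝ) (hb : -1 < b) :
    ∫ x in (0:ℝ)..c, x ^ b = c ^ (b+1) / (b+1) := by
  rw [integral_rpow (Or.inl hb), Real.zero_rpow (by linarith)]; ring

-- lower bound for J
private lemma Jlower (b y : ℝ) (hb : -1 < b) (hy : 0 ≤ y) :
    (Real.exp 1 * (b+1))⁻¹ * (y+1) ^ (-b-1)
      ≤ ∫ x in (0:ℝ)..1, x ^ b * Real.exp (-(y*x)) := by
  set δ : ℝ := (y+1)⁻¹ with hδ
  have hy1 : 0 < y + 1 := by linarith
  have hδ0 : 0 < δ := by positivity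
  have hδ1 : δ ≤ 1 := by rw [hδ]; rw [inv_le_one_iff₀]; right; linarith
  have hb1 : 0 < b + 1 := by linarith
  have step1 : (∫ x in (0:ℝ)..δ, x ^ b * Real.exp (-(y*δ)))
      ≤ ∫ x in (0:ℝ)..δ, x ^ b * Real.exp (-(y*x)) := by
    apply intervalIntegral.integral_mono_on hδ0.le
      ((intervalIntegral.intervalIntegrable_rpow' hb).mul_const _) (intInt b y δ hb)
    intro x hx
    have hx0 : 0 ≤ x := hx.1
    have : Real.exp (-(y*δ)) ≤ Real.exp (-(y*x)) := by
      apply Real.exp_le_exp.2; nlinarith [hx.2]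
    have hxb : (0:ℝ) ≤ x ^ b := Real.rpow_nonneg hx0 b
    nlinarith
  have step2 : (∫ x in (0:ℝ)..δ, x ^ b * Real.exp (-(y*x)))
      ≤ ∫ x in (0:ℝ)..1, x ^ b * Real.exp (-(y*x)) := by
    apply intervalIntegral.integral_mono_interval le_rfl hδ0.le hδ1 ?_ (intInt b y 1 hb)
    filter_upwards [ae_restrict_mem measurableSet_Ioc] with x hx
    have : (0:ℝ) ≤ x ^ b := Real.rpow_nonneg hx.1.le b
    positivity
  have hval : (∫ x in (0:ℝ)..δ, x ^ b * Real.exp (-(y*δ)))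
      = Real.exp (-(y*δ)) * (δ ^ (b+1) / (b+1)) := by
    rw [intervalIntegral.integral_mul_const, rpow_int_val b δ hb]; ring
  have hexp : Real.exp (-1) ≤ Real.exp (-(y*δ)) := by
    apply Real.exp_le_exp.2
    have : y * δ ≤ 1 := by
      rw [hδ]; rw [mul_inv_le_iff₀ hy1]; linarith
    linarith
  have hδpow : δ ^ (b+1) = (y+1) ^ (-b-1) := by
    rw [hδ, Real.inv_rpow hy1.le, ← Real.rpow_neg hy1.le]
    ring_nf
  have hfinal : (Real.exp 1 * (b+1))⁻¹ * (y+1) ^ (-b-1)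
      ≤ Real.exp (-(y*δ)) * (δ ^ (b+1) / (b+1)) := by
    rw [hδpow, mul_inv]
    have hpow : (0:ℝ) < (y+1) ^ (-b-1) := Real.rpow_pos_of_pos hy1 _
    have h1 : Real.exp (-1) = (Real.exp 1)⁻¹ := by rw [Real.exp_neg]
    calc (Real.exp 1)⁻¹ * (b+1)⁻¹ * (y+1) ^ (-b-1)
        = (Real.exp 1)⁻¹ * ((y+1) ^ (-b-1) / (b+1)) := by ring
      _ ≤ Real.exp (-(y*δ)) * ((y+1) ^ (-b-1) / (b+1)) := by
          apply mul_le_mul_of_nonneg_right (by rw [← h1]; exact hexp) (by positivity)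
  linarith [hfinal.trans (hval ▸ step1.trans step2)]


private lemma Jupper (b y : ℝ) (hb : -1 < b) (hy : 0 ≤ y) :
    (∫ x in (0:ℝ)..1, x ^ b * Real.exp (-(y*x)))
      ≤ (2 ^ (b+1) * (Real.Gamma (b+1) + (b+1)⁻¹)) * (y+1) ^ (-b-1) := by
  have hy1 : 0 < y + 1 := by linarith
  have hb1 : 0 < b + 1 := by linarith
  have hG : 0 < Real.Gamma (b+1) := Real.Gamma_pos_of_pos hb1
  have hpw : (0:ℝ) < (y+1) ^ (-b-1) := Real.rpow_pos_of_pos hy1 _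
  rcases le_or_gt 1 y with h1 | h1
  · -- y ≥ 1 : compare with Gamma integral
    have hy0 : 0 < y := by linarith
    have hIoi : IntegrableOn (fun x => x ^ b * Real.exp (-(y*x))) (Ioi 0) := by
      simpa using integrableOn_rpow_mul_exp_neg_mul_rpow hb one_pos hy0
    have hmono : (∫ x in (0:ℝ)..1, x ^ b * Real.exp (-(y*x)))
        ≤ ∫ x in Ioi (0:ℝ), x ^ b * Real.exp (-(y*x)) := by
      rw [intervalIntegral.integral_of_le (by norm_num : (0:ℝ) ≤ 1)]
      apply setIntegral_mono_set hIoi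
      · filter_upwards [ae_restrict_mem measurableSet_Ioi] with x hx
        have : (0:ℝ) ≤ x ^ b := Real.rpow_nonneg (le_of_lt hx) b
        positivity
      · exact (Ioc_subset_Ioi_self).eventuallyLE
    have hval : (∫ x in Ioi (0:ℝ), x ^ b * Real.exp (-(y*x)))
        = (1/y) ^ (b+1) * Real.Gamma (b+1) := by
      have := Real.integral_rpow_mul_exp_neg_mul_Ioi hb1 hy0
      simpa using this
    have hcmp : (1/y) ^ (b+1) ≤ 2 ^ (b+1) * (y+1) ^ (-b-1) := by
      have h2 : (1/y : ℝ) ≤ 2/(y+1) := by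
        rw [div_le_div_iff₀ hy0 hy1]; linarith
      have := Real.rpow_le_rpow (by positivity) h2 hb1.le
      calc (1/y) ^ (b+1) ≤ (2/(y+1)) ^ (b+1) := this
        _ = 2 ^ (b+1) * (y+1) ^ (-b-1) := by
            rw [Real.div_rpow (by norm_num) hy1.le, div_eq_mul_inv, ← Real.rpow_neg hy1.le]
            ring_nf
    calc (∫ x in (0:ℝ)..1, x ^ b * Real.exp (-(y*x)))
        ≤ (1/y) ^ (b+1) * Real.Gamma (b+1) := hval ▸ hmono
      _ ≤ (2 ^ (b+1) * (y+1) ^ (-b-1)) * Real.Gamma (b+1) :=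
          mul_le_mul_of_nonneg_right hcmp hG.le
      _ ≤ (2 ^ (b+1) * (Real.Gamma (b+1) + (b+1)⁻¹)) * (y+1) ^ (-b-1) := by
          have h2p : (0:ℝ) < 2 ^ (b+1) := Real.rpow_pos_of_pos two_pos _
          nlinarith [mul_pos (mul_pos h2p hpw) (inv_pos.2 hb1)]
  · -- y < 1 : bound exp by 1
    have hstep : (∫ x in (0:ℝ)..1, x ^ b * Real.exp (-(y*x)))
        ≤ ∫ x in (0:ℝ)..1, x ^ b := by
      apply intervalIntegral.integral_mono_on (by norm_num) (intInt b y 1 hb)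
        (intervalIntegral.intervalIntegrable_rpow' hb)
      intro x hx
      have hxb : (0:ℝ) ≤ x ^ b := Real.rpow_nonneg hx.1 b
      have : Real.exp (-(y*x)) ≤ 1 := by
        rw [Real.exp_le_one_iff]; nlinarith [hx.1]
      nlinarith
    rw [rpow_int_val b 1 hb, Real.one_rpow] at hstep
    have hkey : 1/(b+1) ≤ (2 ^ (b+1) * (b+1)⁻¹) * (y+1) ^ (-b-1) := by
      have h2 : (y+1) ^ (-b-1) ≥ 2 ^ (-b-1) := by
        apply Real.rpow_le_rpow_of_nonpos hy1 (by linarith) (by linarith)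
      have h22 : (2:ℝ) ^ (b+1) * 2 ^ (-b-1) = 1 := by
        rw [← Real.rpow_add two_pos]; norm_num
      calc (1:ℝ)/(b+1) = (2 ^ (b+1) * 2 ^ (-b-1)) * (b+1)⁻¹ := by rw [h22]; ring
        _ ≤ (2 ^ (b+1) * (y+1) ^ (-b-1)) * (b+1)⁻¹ := by
            have h2p : (0:ℝ) < 2 ^ (b+1) := Real.rpow_pos_of_pos two_pos _
            apply mul_le_mul_of_nonneg_right _ (by positivity)
            exact mul_le_mul_of_nonneg_left h2 h2p.le
        _ = (2 ^ (b+1) * (b+1)⁻¹) * (y+1) ^ (-b-1) := by ring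
    have hG2 : (2:ℝ) ^ (b+1) * Real.Gamma (b+1) * (y+1) ^ (-b-1) ≥ 0 := by positivity
    calc (∫ x in (0:ℝ)..1, x ^ b * Real.exp (-(y*x))) ≤ 1/(b+1) := hstep
      _ ≤ (2 ^ (b+1) * (b+1)⁻¹) * (y+1) ^ (-b-1) := hkey
      _ ≤ (2 ^ (b+1) * (Real.Gamma (b+1) + (b+1)⁻¹)) * (y+1) ^ (-b-1) := by nlinarith

private lemma substEq (b y : ℝ) :
    (∫ s in Set.Ioo (0:ℝ) 1, Real.exp (y * s) * (1 - s) ^ b)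
      = Real.exp y * ∫ x in (0:ℝ)..1, x ^ b * Real.exp (-(y*x)) := by
  rw [← integral_Ioc_eq_integral_Ioo,
    ← intervalIntegral.integral_of_le (by norm_num : (0:ℝ) ≤ 1)]
  have := intervalIntegral.integral_comp_sub_left
    (fun s => Real.exp (y * s) * (1 - s) ^ b) 1 (a := 0) (b := 1)
  simp only [sub_zero, sub_self] at this
  rw [← this, ← intervalIntegral.integral_const_mul]
  congr 1
  ext x
  rw [show y * (1-x) = y + -(y*x) by ring, Real.exp_add, sub_sub_cancel]
  ring

/-- For any `y ≥ 0` and `b > -1`, there exist positive constants `c₁, c₂` depending only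
on `b` such that `c₁ e^y (y+1)^{-b-1} ≤ ∫₀¹ e^{ys} (1-s)^b ds ≤ c₂ e^y (y+1)^{-b-1}`. -/
theorem stmt0 (b : ℝ) (hb : -1 < b) :
    ∃ c₁ c₂ : ℝ, 0 < c₁ ∧ 0 < c₂ ∧ ∀ y : ℝ, 0 ≤ y →
      c₁ * Real.exp y * (y + 1) ^ (-b - 1) ≤
        (∫ s in Set.Ioo (0:ℝ) 1, Real.exp (y * s) * (1 - s) ^ b) ∧
      (∫ s in Set.Ioo (0:ℝ) 1, Real.exp (y * s) * (1 - s) ^ b) ≤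
        c₂ * Real.exp y * (y + 1) ^ (-b - 1) := by
  have hb1 : 0 < b + 1 := by linarith
  have hG : 0 < Real.Gamma (b+1) := Real.Gamma_pos_of_pos hb1
  refine ⟨(Real.exp 1 * (b+1))⁻¹, 2 ^ (b+1) * (Real.Gamma (b+1) + (b+1)⁻¹),
    by positivity, by positivity, fun y hy => ?_⟩
  have hE : 0 < Real.exp y := Real.exp_pos y
  rw [substEq b y]
  constructor
  · have := Jlower b y hb hy
    calc (Real.exp 1 * (b+1))⁻¹ * Real.exp y * (y + 1) ^ (-b - 1)
        = Real.exp y * ((Real.exp 1 * (b+1))⁻¹ * (y+1) ^ (-b-1)) := by ring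
      _ ≤ Real.exp y * ∫ x in (0:ℝ)..1, x ^ b * Real.exp (-(y*x)) :=
          mul_le_mul_of_nonneg_left this hE.le
  · have := Jupper b y hb hy
    calc Real.exp y * ∫ x in (0:ℝ)..1, x ^ b * Real.exp (-(y*x))
        ≤ Real.exp y * ((2 ^ (b+1) * (Real.Gamma (b+1) + (b+1)⁻¹)) * (y+1) ^ (-b-1)) :=
          mul_le_mul_of_nonneg_left this hE.le
      _ = 2 ^ (b+1) * (Real.Gamma (b+1) + (b+1)⁻¹) * Real.exp y * (y + 1) ^ (-b - 1) := by ring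
end

section
/- Let s ∈ (0,1) and α ∈ (0, 2s) with 1 + α > 2s. Then for all 0 < δ₁ ≤ δ₂ ≤ 1, there exist positive constants c₁, c₂ (depending only on s and α) such that c₁ · δ₁^{α-2s} δ₂^{-α} ≤ ∫₀¹ min{ρ/δ₁, 1} · (min{ρ/δ₂, 1})^α · ρ^{-1-2s} dρ ≤ c₂ · δ₁^{α-2s} δ₂^{-α}. -/
open MeasureTheory Real Set

private lemma stmt4_pt (s α δ₁ δ₂ ρ : ℝ) (hα0 : 0 ≤ α) (h1 : 0 < δ₁) (h2 : 0 < δ₂)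
    (hρ : 0 < ρ) :
    min (ρ / δ₁) 1 * (min (ρ / δ₂) 1) ^ α * ρ ^ (-1 - 2 * s) ≤
      δ₁⁻¹ * δ₂ ^ (-α) * ρ ^ (α - 2 * s) := by
  have hm2 : (min (ρ / δ₂) 1) ^ α ≤ (ρ / δ₂) ^ α :=
    rpow_le_rpow (le_min (by positivity) zero_le_one) (min_le_left _ _) hα0
  calc min (ρ / δ₁) 1 * (min (ρ / δ₂) 1) ^ α * ρ ^ (-1 - 2 * s)
      ≤ (ρ / δ₁) * ((ρ / δ₂) ^ α) * ρ ^ (-1 - 2 * s) := by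
        apply mul_le_mul _ le_rfl (rpow_nonneg hρ.le _)
        · positivity
        · exact mul_le_mul (min_le_left _ _) hm2
            (rpow_nonneg (le_min (by positivity) zero_le_one) _) (by positivity)
    _ = δ₁⁻¹ * δ₂ ^ (-α) * ρ ^ (α - 2 * s) := by
        rw [div_rpow hρ.le h2.le, rpow_neg h2.le,
          show α - 2*s = 1 + (α + (-1-2*s)) by ring, rpow_add hρ, rpow_add hρ, rpow_one]
        field_simp

private lemma stmt4_int (s α δ₁ δ₂ : ℝ) (hs0 : 0 < s) (hα0 : 0 < α) (hα2 : 2 * s < 1 + α)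
    (h1 : 0 < δ₁) (h2 : 0 < δ₂) :
    IntegrableOn (fun ρ : ℝ => min (ρ / δ₁) 1 * (min (ρ / δ₂) 1) ^ α * ρ ^ (-1 - 2 * s))
      (Set.Ioo (0:ℝ) 1) := by
  have hg : IntegrableOn (fun ρ : ℝ => δ₁⁻¹ * δ₂ ^ (-α) * ρ ^ (α - 2 * s)) (Set.Ioo (0:ℝ) 1) := by
    have := (intervalIntegral.integrableOn_Ioo_rpow_iff (s := α - 2*s) (t := (1:ℝ)) one_pos).2 (by linarith)
    exact this.const_mul _
  have hmeas : AEStronglyMeasurable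
      (fun ρ : ℝ => min (ρ / δ₁) 1 * (min (ρ / δ₂) 1) ^ α * ρ ^ (-1 - 2 * s))
      (volume.restrict (Set.Ioo (0:ℝ) 1)) := by
    apply Measurable.aestronglyMeasurable
    fun_prop
  refine hg.mono' hmeas ?_
  rw [ae_restrict_iff' measurableSet_Ioo]
  filter_upwards with ρ hρ
  have h0 : (0:ℝ) ≤ min (ρ/δ₁) 1 := le_min (div_nonneg hρ.1.le h1.le) zero_le_one
  have h0' : (0:ℝ) ≤ min (ρ/δ₂) 1 := le_min (div_nonneg hρ.1.le h2.le) zero_le_one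
  rw [Real.norm_eq_abs, abs_of_nonneg (mul_nonneg (mul_nonneg h0 (rpow_nonneg h0' _))
    (rpow_nonneg hρ.1.le _))]
  exact stmt4_pt s α δ₁ δ₂ ρ hα0.le h1 h2 hρ.1

private lemma stmt4_low (s α δ₁ δ₂ : ℝ) (hs0 : 0 < s) (hα0 : 0 < α) (hα2 : 2 * s < 1 + α)
    (h1 : 0 < δ₁) (h12 : δ₁ ≤ δ₂) (h21 : δ₂ ≤ 1) :
    (2:ℝ) ^ (-(2+α)) * (δ₁ ^ (α - 2 * s) * δ₂ ^ (-α)) ≤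
      ∫ ρ in Set.Ioo (0:ℝ) 1, min (ρ / δ₁) 1 * (min (ρ / δ₂) 1) ^ α * ρ ^ (-1 - 2 * s) := by
  have h2 : 0 < δ₂ := lt_of_lt_of_le h1 h12
  have h11 : δ₁ ≤ 1 := h12.trans h21
  have hint := stmt4_int s α δ₁ δ₂ hs0 hα0 hα2 h1 h2
  have hsub : Set.Ioo (δ₁/2) δ₁ ⊆ Set.Ioo (0:ℝ) 1 :=
    Set.Ioo_subset_Ioo (by positivity) h11
  set c : ℝ := (1/2) * ((δ₁/(2*δ₂)) ^ α) * δ₁ ^ (-1-2*s) with hc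
  have step1 : c * (δ₁ - δ₁/2) ≤
      ∫ ρ in Set.Ioo (δ₁/2) δ₁, min (ρ / δ₁) 1 * (min (ρ / δ₂) 1) ^ α * ρ ^ (-1 - 2 * s) := by
    have := setIntegral_ge_of_const_le (μ := volume) (c := c) (s := Set.Ioo (δ₁/2) δ₁)
      measurableSet_Ioo (by simp) ?_ (hint.mono_set hsub)
    · simp [Real.volume_Ioo, ENNReal.toReal_ofReal (by linarith : (0:ℝ) ≤ δ₁ - δ₁/2)] at this
      rw [max_eq_left (by linarith : (0:ℝ) ≤ δ₁ - δ₁/2)] at this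
      linarith
    · intro x hx
      have hx1 : δ₁/2 < x := hx.1
      have hx2 : x < δ₁ := hx.2
      have hx0 : 0 < x := lt_of_le_of_lt (by positivity) hx1
      have f1 : (1:ℝ)/2 ≤ min (x/δ₁) 1 := by
        refine le_min ?_ (by norm_num)
        rw [div_le_div_iff₀ two_pos h1]
        nlinarith
      have f2 : (δ₁/(2*δ₂)) ^ α ≤ (min (x/δ₂) 1) ^ α := by
        apply rpow_le_rpow (by positivity) _ hα0.le
        refine le_min ?_ ?_
        · rw [div_le_div_iff₀ (by positivity) h2]
          nlinarith
        · rw [div_le_one (by positivity)]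
          linarith
      have f3 : δ₁ ^ (-1-2*s) ≤ x ^ (-1-2*s) :=
        rpow_le_rpow_of_nonpos hx0 hx2.le (by linarith)
      calc c ≤ min (x/δ₁) 1 * (min (x/δ₂) 1) ^ α * x ^ (-1-2*s) := by
            rw [hc]
            apply mul_le_mul _ f3 (rpow_nonneg h1.le _)
              (mul_nonneg (le_min (by positivity) zero_le_one)
                (rpow_nonneg (le_min (by positivity) zero_le_one) _))
            exact mul_le_mul f1 f2 (rpow_nonneg (by positivity) _)
              (le_min (by positivity) zero_le_one)
        _ = _ := rfl
  have step2 : (∫ ρ in Set.Ioo (δ₁/2) δ₁,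
        min (ρ / δ₁) 1 * (min (ρ / δ₂) 1) ^ α * ρ ^ (-1 - 2 * s)) ≤
      ∫ ρ in Set.Ioo (0:ℝ) 1, min (ρ / δ₁) 1 * (min (ρ / δ₂) 1) ^ α * ρ ^ (-1 - 2 * s) := by
    apply setIntegral_mono_set hint
    · rw [Filter.EventuallyLE, ae_restrict_iff' measurableSet_Ioo]
      filter_upwards with ρ hρ
      have h0 : (0:ℝ) ≤ min (ρ/δ₁) 1 := le_min (div_nonneg hρ.1.le h1.le) zero_le_one
      have h0' : (0:ℝ) ≤ min (ρ/δ₂) 1 := le_min (div_nonneg hρ.1.le h2.le) zero_le_one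
      exact mul_nonneg (mul_nonneg h0 (rpow_nonneg h0' _)) (rpow_nonneg hρ.1.le _)
    · exact hsub.eventuallyLE
  refine le_trans (le_of_eq ?_) (step1.trans step2)
  -- algebraic identity
  rw [hc, div_rpow h1.le (by positivity), mul_rpow two_pos.le h2.le,
    rpow_neg h2.le, rpow_neg two_pos.le (2+α), rpow_add two_pos,
    show (-1-2*s : ℝ) = -(1+2*s) by ring, rpow_neg h1.le, rpow_add h1,
    show (α - 2*s : ℝ) = α + -(2*s) by ring, rpow_add h1, rpow_neg h1.le (2*s),
    rpow_one, show (2:ℝ)^(2:ℝ) = 4 by rw [show (2:ℝ) = ((2:ℕ):ℝ) by norm_num, rpow_natCast]; norm_num]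
  have p1 : (0:ℝ) < δ₁ ^ α := rpow_pos_of_pos h1 _
  have p2 : (0:ℝ) < δ₂ ^ α := rpow_pos_of_pos h2 _
  have p3 : (0:ℝ) < δ₁ ^ (2*s) := rpow_pos_of_pos h1 _
  have p4 : (0:ℝ) < (2:ℝ) ^ α := rpow_pos_of_pos two_pos _
  field_simp
  ring

private lemma stmt4_up (s α δ₁ δ₂ : ℝ) (hs0 : 0 < s) (hα0 : 0 < α) (hα1 : α < 2 * s)
    (hα2 : 2 * s < 1 + α) (h1 : 0 < δ₁) (h12 : δ₁ ≤ δ₂) (h21 : δ₂ ≤ 1) :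
    (∫ ρ in Set.Ioo (0:ℝ) 1, min (ρ / δ₁) 1 * (min (ρ / δ₂) 1) ^ α * ρ ^ (-1 - 2 * s)) ≤
      (1/(1+α-2*s) + 1/(2*s-α) + 1/(2*s)) * (δ₁ ^ (α - 2 * s) * δ₂ ^ (-α)) := by
  have h2 : 0 < δ₂ := lt_of_lt_of_le h1 h12
  have h11 : δ₁ ≤ 1 := h12.trans h21
  have hint := stmt4_int s α δ₁ δ₂ hs0 hα0 hα2 h1 h2
  set f : ℝ → ℝ := fun ρ => min (ρ / δ₁) 1 * (min (ρ / δ₂) 1) ^ α * ρ ^ (-1 - 2 * s) with hf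
  have hIf : IntervalIntegrable f volume 0 1 := by
    rw [intervalIntegrable_iff_integrableOn_Ioo_of_le zero_le_one]; exact hint
  have hIf1 : IntervalIntegrable f volume 0 δ₁ := by
    apply hIf.mono_set
    rw [Set.uIcc_of_le h1.le, Set.uIcc_of_le zero_le_one]
    exact Set.Icc_subset_Icc le_rfl h11
  have hIf2 : IntervalIntegrable f volume δ₁ δ₂ := by
    apply hIf.mono_set
    rw [Set.uIcc_of_le h12, Set.uIcc_of_le zero_le_one]
    exact Set.Icc_subset_Icc h1.le h21
  have hIf3 : IntervalIntegrable f volume δ₂ 1 := by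
    apply hIf.mono_set
    rw [Set.uIcc_of_le h21, Set.uIcc_of_le zero_le_one]
    exact Set.Icc_subset_Icc h2.le le_rfl
  have hkey : (∫ ρ in Set.Ioo (0:ℝ) 1, f ρ) =
      (∫ ρ in (0:ℝ)..δ₁, f ρ) + (∫ ρ in δ₁..δ₂, f ρ) + (∫ ρ in δ₂..(1:ℝ), f ρ) := by
    rw [← integral_Ioc_eq_integral_Ioo, ← intervalIntegral.integral_of_le zero_le_one,
      intervalIntegral.integral_add_adjacent_intervals hIf1 hIf2,
      intervalIntegral.integral_add_adjacent_intervals (hIf1.trans hIf2) hIf3]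
  have hne1 : (0:ℝ) < 1 + α - 2*s := by linarith
  have hne2 : (0:ℝ) < 2*s - α := by linarith
  -- Piece 1
  have hg1 : IntervalIntegrable (fun ρ : ℝ => δ₁⁻¹ * δ₂ ^ (-α) * ρ ^ (α - 2*s)) volume 0 δ₁ :=
    (intervalIntegral.intervalIntegrable_rpow' (by linarith)).const_mul _
  have B1 : (∫ ρ in (0:ℝ)..δ₁, f ρ) ≤ ∫ ρ in (0:ℝ)..δ₁, δ₁⁻¹ * δ₂ ^ (-α) * ρ ^ (α - 2*s) := by
    apply intervalIntegral.integral_mono_on h1.le hIf1 hg1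
    intro x hx
    rcases eq_or_lt_of_le hx.1 with h | h
    · rw [hf, ← h]
      simp [zero_rpow (show (α - 2*s : ℝ) ≠ 0 by linarith),
        zero_rpow (show (-1 - 2*s : ℝ) ≠ 0 by linarith)]
    · exact stmt4_pt s α δ₁ δ₂ x hα0.le h1 h2 h
  have C1 : (∫ ρ in (0:ℝ)..δ₁, δ₁⁻¹ * δ₂ ^ (-α) * ρ ^ (α - 2*s)) =
      (1/(1+α-2*s)) * (δ₁ ^ (α - 2 * s) * δ₂ ^ (-α)) := by
    rw [intervalIntegral.integral_const_mul, integral_rpow (Or.inl (by linarith)),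
      zero_rpow (show (α - 2*s + 1 : ℝ) ≠ 0 by linarith), rpow_add_one h1.ne' (α - 2*s)]
    rw [sub_zero]
    have hA : (α - 2*s + 1 : ℝ) ≠ 0 := by linarith
    field_simp
    ring
  -- Piece 2
  have h0notin2 : (0:ℝ) ∉ Set.uIcc δ₁ δ₂ := by
    rw [Set.uIcc_of_le h12]; exact fun h => absurd h.1 (not_le.2 h1)
  have hg2 : IntervalIntegrable (fun ρ : ℝ => δ₂ ^ (-α) * ρ ^ (α - 1 - 2*s)) volume δ₁ δ₂ :=
    (intervalIntegral.intervalIntegrable_rpow (Or.inr h0notin2)).const_mul _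
  have B2 : (∫ ρ in δ₁..δ₂, f ρ) ≤ ∫ ρ in δ₁..δ₂, δ₂ ^ (-α) * ρ ^ (α - 1 - 2*s) := by
    apply intervalIntegral.integral_mono_on h12 hIf2 hg2
    intro x hx
    have hx0 : 0 < x := lt_of_lt_of_le h1 hx.1
    have h0' : (0:ℝ) ≤ min (x/δ₂) 1 := le_min (div_nonneg hx0.le h2.le) zero_le_one
    calc f x ≤ 1 * ((x / δ₂) ^ α) * x ^ (-1 - 2 * s) := by
          apply mul_le_mul _ le_rfl (rpow_nonneg hx0.le _) (by positivity)
          exact mul_le_mul (min_le_right _ _)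
            (rpow_le_rpow h0' (min_le_left _ _) hα0.le) (rpow_nonneg h0' _) zero_le_one
      _ = δ₂ ^ (-α) * x ^ (α - 1 - 2*s) := by
          rw [one_mul, div_rpow hx0.le h2.le, rpow_neg h2.le,
            show (α - 1 - 2*s : ℝ) = α + (-1 - 2*s) by ring, rpow_add hx0]
          field_simp
  have C2 : (∫ ρ in δ₁..δ₂, δ₂ ^ (-α) * ρ ^ (α - 1 - 2*s)) ≤
      (1/(2*s-α)) * (δ₁ ^ (α - 2 * s) * δ₂ ^ (-α)) := by
    rw [intervalIntegral.integral_const_mul,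
      integral_rpow (Or.inr ⟨by intro h; rw [show (-1:ℝ) = -1 - 0 by ring] at h; nlinarith, h0notin2⟩)]
    have e : (α - 1 - 2*s + 1 : ℝ) = α - 2*s := by ring
    rw [e]
    have key : (δ₂ ^ (α - 2*s) - δ₁ ^ (α - 2*s)) / (α - 2*s) ≤ δ₁ ^ (α - 2*s) / (2*s - α) := by
      rw [show (α - 2*s : ℝ) = -(2*s - α) by ring, rpow_neg h2.le, rpow_neg h1.le]
      rw [div_neg, ← neg_div, neg_sub]
      gcongr
      exact sub_le_self _ (inv_nonneg.2 (rpow_nonneg h2.le _))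
    calc δ₂ ^ (-α) * ((δ₂ ^ (α - 2*s) - δ₁ ^ (α - 2*s)) / (α - 2*s))
        ≤ δ₂ ^ (-α) * (δ₁ ^ (α - 2*s) / (2*s - α)) := by
          apply mul_le_mul_of_nonneg_left key (rpow_nonneg h2.le _)
      _ = (1/(2*s-α)) * (δ₁ ^ (α - 2 * s) * δ₂ ^ (-α)) := by ring
  -- Piece 3
  have h0notin3 : (0:ℝ) ∉ Set.uIcc δ₂ 1 := by
    rw [Set.uIcc_of_le h21]; exact fun h => absurd h.1 (not_le.2 h2)
  have hg3 : IntervalIntegrable (fun ρ : ℝ => ρ ^ (-1 - 2*s)) volume δ₂ 1 :=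
    intervalIntegral.intervalIntegrable_rpow (Or.inr h0notin3)
  have B3 : (∫ ρ in δ₂..(1:ℝ), f ρ) ≤ ∫ ρ in δ₂..(1:ℝ), ρ ^ (-1 - 2*s) := by
    apply intervalIntegral.integral_mono_on h21 hIf3 hg3
    intro x hx
    have hx0 : 0 < x := lt_of_lt_of_le h2 hx.1
    have h0' : (0:ℝ) ≤ min (x/δ₂) 1 := le_min (div_nonneg hx0.le h2.le) zero_le_one
    have : min (x/δ₁) 1 * (min (x/δ₂) 1) ^ α ≤ 1 :=
      mul_le_one₀ (min_le_right _ _) (rpow_nonneg h0' _)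
        (rpow_le_one h0' (min_le_right _ _) hα0.le)
    calc f x ≤ 1 * x ^ (-1 - 2 * s) := by
          apply mul_le_mul this le_rfl (rpow_nonneg hx0.le _) zero_le_one
      _ = x ^ (-1 - 2*s) := one_mul _
  have C3 : (∫ ρ in δ₂..(1:ℝ), ρ ^ (-1 - 2*s)) ≤
      (1/(2*s)) * (δ₁ ^ (α - 2 * s) * δ₂ ^ (-α)) := by
    rw [integral_rpow (Or.inr ⟨by intro h; nlinarith, h0notin3⟩)]
    have e : (-1 - 2*s + 1 : ℝ) = -(2*s) := by ring
    rw [e, one_rpow]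
    have hsplit : δ₂ ^ (-(2*s)) = δ₂ ^ (α - 2*s) * δ₂ ^ (-α) := by
      rw [← rpow_add h2]; ring_nf
    have hmono : δ₂ ^ (α - 2*s) ≤ δ₁ ^ (α - 2*s) :=
      rpow_le_rpow_of_nonpos h1 h12 (by linarith)
    calc (1 - δ₂ ^ (-(2*s))) / (-(2*s)) = (δ₂ ^ (-(2*s)) - 1) / (2*s) := by
          rw [div_neg, ← neg_div, neg_sub]
      _ ≤ δ₂ ^ (-(2*s)) / (2*s) := by gcongr; exact sub_le_self _ zero_le_one
      _ = δ₂ ^ (α - 2*s) * δ₂ ^ (-α) / (2*s) := by rw [hsplit]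
      _ ≤ δ₁ ^ (α - 2*s) * δ₂ ^ (-α) / (2*s) := by
          gcongr
      _ = (1/(2*s)) * (δ₁ ^ (α - 2 * s) * δ₂ ^ (-α)) := by ring
  rw [hkey, show (1/(1+α-2*s) + 1/(2*s-α) + 1/(2*s)) * (δ₁ ^ (α - 2 * s) * δ₂ ^ (-α)) =
    (1/(1+α-2*s)) * (δ₁ ^ (α - 2 * s) * δ₂ ^ (-α)) +
    (1/(2*s-α)) * (δ₁ ^ (α - 2 * s) * δ₂ ^ (-α)) +
    (1/(2*s)) * (δ₁ ^ (α - 2 * s) * δ₂ ^ (-α)) by ring]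
  exact add_le_add (add_le_add (B1.trans_eq C1) (B2.trans C2)) (B3.trans C3)

/-- Two-sided bound for the interaction of two scale-truncated singular weights:
`∫₀¹ min{ρ/δ₁,1} min{ρ/δ₂,1}^α ρ^{-1-2s} dρ ∼ δ₁^{α-2s} δ₂^{-α}` for `0 < δ₁ ≤ δ₂ ≤ 1`. -/
theorem stmt4 (s α : ℝ) (hs : s ∈ Set.Ioo (0:ℝ) 1) (hα0 : 0 < α) (hα1 : α < 2 * s)
    (hα2 : 2 * s < 1 + α) :
    ∃ c₁ c₂ : ℝ, 0 < c₁ ∧ 0 < c₂ ∧ ∀ δ₁ δ₂ : ℝ, 0 < δ₁ → δ₁ ≤ δ₂ → δ₂ ≤ 1 →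
      c₁ * (δ₁ ^ (α - 2 * s) * δ₂ ^ (-α)) ≤
        (∫ ρ in Set.Ioo (0:ℝ) 1, min (ρ / δ₁) 1 * (min (ρ / δ₂) 1) ^ α * ρ ^ (-1 - 2 * s)) ∧
      (∫ ρ in Set.Ioo (0:ℝ) 1, min (ρ / δ₁) 1 * (min (ρ / δ₂) 1) ^ α * ρ ^ (-1 - 2 * s)) ≤
        c₂ * (δ₁ ^ (α - 2 * s) * δ₂ ^ (-α)) := by
  obtain ⟨hs0, hs1⟩ := hs
  refine ⟨(2:ℝ) ^ (-(2+α)), 1/(1+α-2*s) + 1/(2*s-α) + 1/(2*s),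
    rpow_pos_of_pos two_pos _, ?_, fun δ₁ δ₂ h1 h12 h21 =>
      ⟨stmt4_low s α δ₁ δ₂ hs0 hα0 hα2 h1 h12 h21,
       stmt4_up s α δ₁ δ₂ hs0 hα0 hα1 hα2 h1 h12 h21⟩⟩
  have p1 : (0:ℝ) < 1/(1+α-2*s) := by
    apply div_pos one_pos; linarith
  have p2 : (0:ℝ) < 1/(2*s-α) := by
    apply div_pos one_pos; linarith
  have p3 : (0:ℝ) < 1/(2*s) := by
    apply div_pos one_pos; linarith
  linarith
end

section
/- Let η ≥ 0 and let f: ℝᵈ → ℝ be a measurable function such that M(f) := ∫_{ℝᵈ} |f(z)| dz + sup_{z ∈ ℝᵈ} ⟨z⟩^η ∫_{|w| ≥ |z|} |f(w)| dw is finite, where ⟨z⟩ = sqrt(1 + |z|²). Then for any λ ≥ 0 and any z ∈ ℝᵈ, ∫_{ℝᵈ} |f(z - w)| · ⟨λ + |w|⟩^{-η} dw ≤ C · ⟨λ + |z|⟩^{-η} · M(f), where C depends only on η and d. -/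
open MeasureTheory Real Set

set_option maxHeartbeats 1000000

private lemma jb_pos (t : ℝ) : 0 < Real.sqrt (1 + t ^ 2) :=
  Real.sqrt_pos.2 (by positivity)

private lemma one_le_jb (t : ℝ) : 1 ≤ Real.sqrt (1 + t ^ 2) :=
  Real.one_le_sqrt.2 (by nlinarith [sq_nonneg t])

private lemma jb_mono {s t : ℝ} (hst : s ≤ t) (hs : 0 ≤ s) :
    Real.sqrt (1 + s ^ 2) ≤ Real.sqrt (1 + t ^ 2) :=
  Real.sqrt_le_sqrt (by nlinarith)

/-- ⟨a+b⟩ ≤ 2√2 ⟨a⟩ ⟨b/2⟩ -/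
private lemma jb_split (a b : ℝ) :
    Real.sqrt (1 + (a + b) ^ 2) ≤
      2 * Real.sqrt 2 * (Real.sqrt (1 + a ^ 2) * Real.sqrt (1 + (b / 2) ^ 2)) := by
  have h1 : Real.sqrt (1 + (a + b) ^ 2) ≤ Real.sqrt (8 * ((1 + a ^ 2) * (1 + (b / 2) ^ 2))) := by
    apply Real.sqrt_le_sqrt
    nlinarith [sq_nonneg (a - b), sq_nonneg (a * b), sq_nonneg b, sq_nonneg (a - b/2),
      sq_nonneg (a * b / 2)]
  refine h1.trans_eq ?_
  rw [show (8:ℝ) = 2^2 * 2 by norm_num, Real.sqrt_mul (by positivity),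
    Real.sqrt_mul (by positivity), Real.sqrt_sq (by norm_num), Real.sqrt_mul (by positivity),
    mul_assoc]

/-- ⟨x⟩ ≤ 2 ⟨y⟩ when 0 ≤ x ≤ 2y -/
private lemma jb_double {x y : ℝ} (hx : 0 ≤ x) (h : x ≤ 2 * y) :
    Real.sqrt (1 + x ^ 2) ≤ 2 * Real.sqrt (1 + y ^ 2) := by
  have h1 : Real.sqrt (1 + x ^ 2) ≤ Real.sqrt (4 * (1 + y ^ 2)) := by
    apply Real.sqrt_le_sqrt; nlinarith
  refine h1.trans_eq ?_
  rw [show (4:ℝ) = 2^2 by norm_num, Real.sqrt_mul (by positivity), Real.sqrt_sq (by norm_num)]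

/-- if x ≤ c * y with everything positive, then y^(-η) ≤ c^η * x^(-η) -/
private lemma rpow_neg_flip {x y c η : ℝ} (hη : 0 ≤ η) (hx : 0 < x) (hy : 0 < y)
    (hc : 0 < c) (h : x ≤ c * y) : y ^ (-η) ≤ c ^ η * x ^ (-η) := by
  have h1 : (c * y) ^ (-η) ≤ x ^ (-η) :=
    Real.rpow_le_rpow_of_nonpos hx h (neg_nonpos.2 hη)
  have h2 : (c * y) ^ (-η) = c ^ (-η) * y ^ (-η) := Real.mul_rpow hc.le hy.le
  have h3 : c ^ η * c ^ (-η) = 1 := by rw [← Real.rpow_add hc]; simp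
  calc y ^ (-η) = c ^ η * (c ^ (-η) * y ^ (-η)) := by rw [← mul_assoc, h3, one_mul]
    _ = c ^ η * (c * y) ^ (-η) := by rw [h2]
    _ ≤ c ^ η * x ^ (-η) := mul_le_mul_of_nonneg_left h1 (Real.rpow_nonneg hc.le η)

/-- Weighted convolution estimate: if `f` is integrable and the weighted tail integrals
`⟨z⟩^η ∫_{|w|≥|z|} |f|` are bounded by `K`, then
`∫ |f(z-w)| ⟨λ+|w|⟩^{-η} dw ≤ C ⟨λ+|z|⟩^{-η} (‖f‖_{L¹} + K)`. -/
theorem stmt6 (d : ℕ) (η : ℝ) (hη : 0 ≤ η) :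
    ∃ C : ℝ, 0 < C ∧
      ∀ f : EuclideanSpace ℝ (Fin d) → ℝ, Integrable f →
      ∀ K : ℝ,
        (∀ z : EuclideanSpace ℝ (Fin d),
          Real.sqrt (1 + ‖z‖ ^ 2) ^ η *
            (∫ w in {w : EuclideanSpace ℝ (Fin d) | ‖z‖ ≤ ‖w‖}, |f w|) ≤ K) →
      ∀ l : ℝ, 0 ≤ l → ∀ z : EuclideanSpace ℝ (Fin d),
        (∫ w, |f (z - w)| * Real.sqrt (1 + (l + ‖w‖) ^ 2) ^ (-η)) ≤
          C * Real.sqrt (1 + (l + ‖z‖) ^ 2) ^ (-η) * ((∫ w, |f w|) + K) := by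
  refine ⟨(2:ℝ) ^ η + (2 * Real.sqrt 2) ^ η, by positivity, ?_⟩
  intro f hf K hK l hl z
  set Jz : ℝ := Real.sqrt (1 + (l + ‖z‖) ^ 2) with hJz
  have hJz_pos : 0 < Jz := jb_pos _
  have hJzn : 0 ≤ Jz ^ (-η) := Real.rpow_nonneg hJz_pos.le _
  -- K is nonnegative
  have hK0 : 0 ≤ K := by
    refine le_trans ?_ (hK 0)
    have h1 : (0:ℝ) ≤ ∫ w in {w : EuclideanSpace ℝ (Fin d) | ‖(0:EuclideanSpace ℝ (Fin d))‖ ≤ ‖w‖}, |f w| :=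
      setIntegral_nonneg (measurableSet_le measurable_const measurable_norm)
        (fun x _ => abs_nonneg _)
    positivity
  have hfabs : (0:ℝ) ≤ ∫ w, |f w| := integral_nonneg (fun w => abs_nonneg _)
  -- integrability facts
  have hfz : Integrable (fun w => |f (z - w)|) := ((integrable_comp_sub_left f z).2 hf).abs
  have hwmeas : Continuous (fun w : EuclideanSpace ℝ (Fin d) => Real.sqrt (1 + (l + ‖w‖) ^ 2) ^ (-η)) := by
    apply Continuous.rpow_const
    · exact (continuous_const.add ((continuous_const.add continuous_norm).pow 2)).sqrt
    · intro w; exact Or.inl (jb_pos _).ne'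
  set g : EuclideanSpace ℝ (Fin d) → ℝ := fun w => |f (z - w)| * Real.sqrt (1 + (l + ‖w‖) ^ 2) ^ (-η) with hg
  have hg_nonneg : ∀ w, 0 ≤ g w := fun w =>
    mul_nonneg (abs_nonneg _) (Real.rpow_nonneg (jb_pos _).le _)
  have hg_le : ∀ w, g w ≤ |f (z - w)| := by
    intro w
    have h1 : Real.sqrt (1 + (l + ‖w‖) ^ 2) ^ (-η) ≤ 1 :=
      Real.rpow_le_one_of_one_le_of_nonpos (one_le_jb _) (neg_nonpos.2 hη)
    calc g w ≤ |f (z - w)| * 1 := mul_le_mul_of_nonneg_left h1 (abs_nonneg _)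
      _ = |f (z - w)| := mul_one _
  have hg_int : Integrable g :=
    Integrable.mono hfz (hfz.aestronglyMeasurable.mul hwmeas.aestronglyMeasurable)
      (Filter.Eventually.of_forall fun w => by
        rw [Real.norm_eq_abs, abs_of_nonneg (hg_nonneg w), Real.norm_eq_abs, abs_abs]
        exact hg_le w)
  -- split the integral
  set A : Set (EuclideanSpace ℝ (Fin d)) := {w | ‖z‖ / 2 ≤ ‖w‖} with hA
  have hA_meas : MeasurableSet A := measurableSet_le measurable_const measurable_norm
  have hsplit : ∫ w, g w = (∫ w in A, g w) + ∫ w in Aᶜ, g w :=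
    (integral_add_compl hA_meas hg_int).symm
  -- Part 1 : on A
  have hPart1 : (∫ w in A, g w) ≤ (2:ℝ) ^ η * Jz ^ (-η) * ∫ w, |f w| := by
    have hbound : ∀ w ∈ A, g w ≤ |f (z - w)| * ((2:ℝ) ^ η * Jz ^ (-η)) := by
      intro w hw
      have hw' : ‖z‖ / 2 ≤ ‖w‖ := hw
      have hle : l + ‖z‖ ≤ 2 * (l + ‖w‖) := by
        have := norm_nonneg w; linarith
      have h2 : Real.sqrt (1 + (l + ‖w‖) ^ 2) ^ (-η) ≤ (2:ℝ) ^ η * Jz ^ (-η) :=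
        rpow_neg_flip hη hJz_pos (jb_pos _) two_pos
          (by rw [hJz]; calc Real.sqrt (1 + (l + ‖z‖) ^ 2)
                ≤ 2 * Real.sqrt (1 + (l + ‖w‖) ^ 2) := jb_double (by positivity) hle
              _ = _ := by ring_nf)
      exact mul_le_mul_of_nonneg_left h2 (abs_nonneg _)
    calc (∫ w in A, g w)
        ≤ ∫ w in A, |f (z - w)| * ((2:ℝ) ^ η * Jz ^ (-η)) := by
          apply setIntegral_mono_on (hg_int.integrableOn)
            ((hfz.mul_const _).integrableOn) hA_meas hbound
      _ ≤ ∫ w, |f (z - w)| * ((2:ℝ) ^ η * Jz ^ (-η)) := by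
          apply setIntegral_le_integral (hfz.mul_const _)
          exact Filter.Eventually.of_forall fun w => by positivity
      _ = (∫ w, |f (z - w)|) * ((2:ℝ) ^ η * Jz ^ (-η)) := integral_mul_const _ _
      _ = (∫ w, |f w|) * ((2:ℝ) ^ η * Jz ^ (-η)) := by
          rw [integral_sub_left_eq_self (fun w => |f w|) volume z]
      _ = (2:ℝ) ^ η * Jz ^ (-η) * ∫ w, |f w| := by ring
  -- tail bound from the hypothesis applied at (2⁻¹ : ℝ) • z
  have htail : (∫ u in {u : EuclideanSpace ℝ (Fin d) | ‖z‖ / 2 ≤ ‖u‖}, |f u|) ≤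
      K * Real.sqrt (1 + (‖z‖ / 2) ^ 2) ^ (-η) := by
    have hz2 : ‖(2⁻¹ : ℝ) • z‖ = ‖z‖ / 2 := by
      rw [norm_smul]; simp [norm_inv]; ring
    have h1 := hK ((2⁻¹ : ℝ) • z)
    rw [hz2] at h1
    set Jh : ℝ := Real.sqrt (1 + (‖z‖ / 2) ^ 2) with hJh
    have hJh_pos : 0 < Jh := jb_pos _
    have hp : 0 < Jh ^ η := Real.rpow_pos_of_pos hJh_pos η
    rw [Real.rpow_neg hJh_pos.le, ← div_eq_mul_inv, le_div_iff₀ hp, mul_comm]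
    exact h1
  -- Part 2 : on Aᶜ
  have hPart2 : (∫ w in Aᶜ, g w) ≤ (2 * Real.sqrt 2) ^ η * Jz ^ (-η) * K := by
    set Jl : ℝ := Real.sqrt (1 + l ^ 2) with hJl
    have hJl_pos : 0 < Jl := jb_pos _
    -- g ≤ Jl^(-η) * |f(z-·)| everywhere
    have hgw : ∀ w, g w ≤ |f (z - w)| * Jl ^ (-η) := by
      intro w
      have h1 : Real.sqrt (1 + (l + ‖w‖) ^ 2) ^ (-η) ≤ Jl ^ (-η) := by
        apply Real.rpow_le_rpow_of_nonpos hJl_pos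
          (jb_mono (by linarith [norm_nonneg w]) hl) (neg_nonpos.2 hη)
      exact mul_le_mul_of_nonneg_left h1 (abs_nonneg _)
    -- ∫_{Aᶜ} |f(z-w)| dw ≤ tail integral
    have hchange : (∫ w in Aᶜ, |f (z - w)|) ≤ ∫ u in {u : EuclideanSpace ℝ (Fin d) | ‖z‖ / 2 ≤ ‖u‖}, |f u| := by
      have hS_meas : MeasurableSet {u : EuclideanSpace ℝ (Fin d) | ‖z‖ / 2 ≤ ‖u‖} :=
        measurableSet_le measurable_const measurable_norm
      have hB_meas : MeasurableSet {w : EuclideanSpace ℝ (Fin d) | ‖z‖ / 2 ≤ ‖z - w‖} :=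
        measurableSet_le measurable_const (measurable_const.sub measurable_id).norm
      have hsub : Aᶜ ⊆ {w : EuclideanSpace ℝ (Fin d) | ‖z‖ / 2 ≤ ‖z - w‖} := by
        intro w hw
        simp only [hA, mem_compl_iff, mem_setOf_eq, not_le] at hw
        simp only [mem_setOf_eq]
        calc ‖z‖ / 2 ≤ ‖z‖ - ‖w‖ := by linarith
          _ ≤ ‖z - w‖ := by
              have := norm_sub_norm_le z w; linarith
      have h1 : (∫ w in Aᶜ, |f (z - w)|) ≤
          ∫ w in {w : EuclideanSpace ℝ (Fin d) | ‖z‖ / 2 ≤ ‖z - w‖}, |f (z - w)| :=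
        setIntegral_mono_set hfz.integrableOn
          (Filter.Eventually.of_forall fun w => abs_nonneg _)
          (Filter.Eventually.of_forall hsub)
      refine h1.trans_eq ?_
      have h2 : ∀ w : EuclideanSpace ℝ (Fin d),
          ({w : EuclideanSpace ℝ (Fin d) | ‖z‖ / 2 ≤ ‖z - w‖}).indicator
            (fun w => |f (z - w)|) w =
          ({u : EuclideanSpace ℝ (Fin d) | ‖z‖ / 2 ≤ ‖u‖}).indicator
            (fun u => |f u|) (z - w) := by
        intro w
        by_cases hw : w ∈ {w : EuclideanSpace ℝ (Fin d) | ‖z‖ / 2 ≤ ‖z - w‖}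
        · exact (indicator_of_mem hw _).trans (indicator_of_mem
            (show z - w ∈ {u : EuclideanSpace ℝ (Fin d) | ‖z‖ / 2 ≤ ‖u‖} from hw)
            (fun u => |f u|)).symm
        · exact (indicator_of_notMem hw _).trans (indicator_of_notMem
            (show z - w ∉ {u : EuclideanSpace ℝ (Fin d) | ‖z‖ / 2 ≤ ‖u‖} from hw)
            (fun u => |f u|)).symm
      calc (∫ w in {w : EuclideanSpace ℝ (Fin d) | ‖z‖ / 2 ≤ ‖z - w‖}, |f (z - w)|)
          = ∫ w, ({w : EuclideanSpace ℝ (Fin d) | ‖z‖ / 2 ≤ ‖z - w‖}).indicator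
              (fun w => |f (z - w)|) w := (integral_indicator hB_meas).symm
        _ = ∫ w, ({u : EuclideanSpace ℝ (Fin d) | ‖z‖ / 2 ≤ ‖u‖}).indicator
              (fun u => |f u|) (z - w) :=
            integral_congr_ae (Filter.Eventually.of_forall h2)
        _ = ∫ u, ({u : EuclideanSpace ℝ (Fin d) | ‖z‖ / 2 ≤ ‖u‖}).indicator
              (fun u => |f u|) u :=
            integral_sub_left_eq_self
              (({u : EuclideanSpace ℝ (Fin d) | ‖z‖ / 2 ≤ ‖u‖}).indicator fun u => |f u|)
              volume z
        _ = ∫ u in {u : EuclideanSpace ℝ (Fin d) | ‖z‖ / 2 ≤ ‖u‖}, |f u| :=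
            integral_indicator hS_meas
    have hmain : (∫ w in Aᶜ, g w) ≤ Jl ^ (-η) * (K * Real.sqrt (1 + (‖z‖ / 2) ^ 2) ^ (-η)) := by
      calc (∫ w in Aᶜ, g w) ≤ ∫ w in Aᶜ, |f (z - w)| * Jl ^ (-η) := by
            apply setIntegral_mono_on (hg_int.integrableOn)
              ((hfz.mul_const _).integrableOn) hA_meas.compl (fun w _ => hgw w)
        _ = (∫ w in Aᶜ, |f (z - w)|) * Jl ^ (-η) := integral_mul_const _ _
        _ ≤ (∫ u in {u : EuclideanSpace ℝ (Fin d) | ‖z‖ / 2 ≤ ‖u‖}, |f u|) * Jl ^ (-η) :=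
            mul_le_mul_of_nonneg_right hchange (Real.rpow_nonneg hJl_pos.le _)
        _ ≤ (K * Real.sqrt (1 + (‖z‖ / 2) ^ 2) ^ (-η)) * Jl ^ (-η) :=
            mul_le_mul_of_nonneg_right htail (Real.rpow_nonneg hJl_pos.le _)
        _ = Jl ^ (-η) * (K * Real.sqrt (1 + (‖z‖ / 2) ^ 2) ^ (-η)) := by ring
    refine hmain.trans ?_
    -- Jl^(-η) * Jh^(-η) ≤ (2√2)^η * Jz^(-η)
    have hJh_pos : 0 < Real.sqrt (1 + (‖z‖ / 2) ^ 2) := jb_pos _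
    have hprod : Jl ^ (-η) * Real.sqrt (1 + (‖z‖ / 2) ^ 2) ^ (-η) ≤
        (2 * Real.sqrt 2) ^ η * Jz ^ (-η) := by
      have h1 : Jz ≤ (2 * Real.sqrt 2) * (Jl * Real.sqrt (1 + (‖z‖ / 2) ^ 2)) :=
        jb_split l ‖z‖
      have h2 : (Jl * Real.sqrt (1 + (‖z‖ / 2) ^ 2)) ^ (-η) ≤
          (2 * Real.sqrt 2) ^ η * Jz ^ (-η) :=
        rpow_neg_flip hη hJz_pos (by positivity) (by positivity) h1
      calc Jl ^ (-η) * Real.sqrt (1 + (‖z‖ / 2) ^ 2) ^ (-η)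
          = (Jl * Real.sqrt (1 + (‖z‖ / 2) ^ 2)) ^ (-η) :=
            (Real.mul_rpow hJl_pos.le hJh_pos.le).symm
        _ ≤ _ := h2
    calc Jl ^ (-η) * (K * Real.sqrt (1 + (‖z‖ / 2) ^ 2) ^ (-η))
        = (Jl ^ (-η) * Real.sqrt (1 + (‖z‖ / 2) ^ 2) ^ (-η)) * K := by ring
      _ ≤ ((2 * Real.sqrt 2) ^ η * Jz ^ (-η)) * K := mul_le_mul_of_nonneg_right hprod hK0
      _ = (2 * Real.sqrt 2) ^ η * Jz ^ (-η) * K := by ring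
  -- combine
  have h2pos : (0:ℝ) ≤ (2:ℝ) ^ η := by positivity
  have h22pos : (0:ℝ) ≤ (2 * Real.sqrt 2) ^ η := by positivity
  calc (∫ w, g w) = (∫ w in A, g w) + ∫ w in Aᶜ, g w := hsplit
    _ ≤ (2:ℝ) ^ η * Jz ^ (-η) * (∫ w, |f w|) + (2 * Real.sqrt 2) ^ η * Jz ^ (-η) * K :=
        add_le_add hPart1 hPart2
    _ ≤ ((2:ℝ) ^ η + (2 * Real.sqrt 2) ^ η) * Jz ^ (-η) * ((∫ w, |f w|) + K) := by
        nlinarith [mul_nonneg hJzn hfabs, mul_nonneg hJzn hK0,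
          mul_nonneg (mul_nonneg h2pos hJzn) hK0,
          mul_nonneg (mul_nonneg h22pos hJzn) hfabs]
end

section
/- Let s ∈ (0,1), t > 0, and ξ, η ∈ ℝᵈ. Then ∫₀ᵗ |τξ - η|^{2s} dτ ≥ c · t·(|η| + t|ξ|)^{2s} for a constant c > 0 depending only on s. More precisely: if |η| ≤ (t/2)|ξ| then ∫_{9t/10}^{t} |τξ - η|^{2s} dτ ≳ t·(t|ξ|)^{2s}, while if |η| ≥ (t/2)|ξ| then ∫₀^{t/10} |τξ - η|^{2s} dτ ≳ t·|η|^{2s}. -/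
open MeasureTheory Real Set

private lemma const_le_integral {f : ℝ → ℝ} {a b C : ℝ} (hab : a ≤ b)
    (hf : IntervalIntegrable f volume a b) (h : ∀ x ∈ Set.Icc a b, C ≤ f x) :
    (b - a) * C ≤ ∫ x in a..b, f x := by
  have := intervalIntegral.integral_mono_on (f := fun _ => C) hab
    intervalIntegrable_const hf h
  rwa [intervalIntegral.integral_const, smul_eq_mul] at this

/-- Lower bound for the time-integrated fractional symbol:
`∫₀ᵗ |τξ - η|^{2s} dτ ≥ c t (|η| + t|ξ|)^{2s}`, together with the two localized versions:
if `|η| ≤ (t/2)|ξ|` then `∫_{9t/10}^t |τξ-η|^{2s} dτ ≳ t (t|ξ|)^{2s}`, and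
if `|η| ≥ (t/2)|ξ|` then `∫₀^{t/10} |τξ-η|^{2s} dτ ≳ t |η|^{2s}`. -/
theorem stmt13 (d : ℕ) (s : ℝ) (hs : s ∈ Set.Ioo (0:ℝ) 1) :
    ∃ c : ℝ, 0 < c ∧ ∀ t : ℝ, 0 < t → ∀ ξ η : EuclideanSpace ℝ (Fin d),
      (c * (t * (‖η‖ + t * ‖ξ‖) ^ (2 * s)) ≤ ∫ τ in (0:ℝ)..t, ‖τ • ξ - η‖ ^ (2 * s)) ∧
      (‖η‖ ≤ t / 2 * ‖ξ‖ →
        c * (t * (t * ‖ξ‖) ^ (2 * s)) ≤ ∫ τ in (9 * t / 10)..t, ‖τ • ξ - η‖ ^ (2 * s)) ∧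
      (t / 2 * ‖ξ‖ ≤ ‖η‖ →
        c * (t * ‖η‖ ^ (2 * s)) ≤ ∫ τ in (0:ℝ)..(t / 10), ‖τ • ξ - η‖ ^ (2 * s)) := by
  obtain ⟨hs0, hs1⟩ := hs
  have h2s0 : (0:ℝ) ≤ 2 * s := by linarith
  have h2s2 : 2 * s ≤ 2 := by linarith
  refine ⟨8/1125, by norm_num, fun t ht ξ η => ?_⟩
  have hcont : Continuous fun τ : ℝ => ‖τ • ξ - η‖ ^ (2 * s) := by
    apply Continuous.rpow_const (by continuity)
    intro x; exact Or.inr h2s0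
  have hint : ∀ a b : ℝ, IntervalIntegrable (fun τ : ℝ => ‖τ • ξ - η‖ ^ (2 * s)) volume a b :=
    fun a b => hcont.intervalIntegrable a b
  have hnn : ∀ τ : ℝ, 0 ≤ ‖τ • ξ - η‖ ^ (2 * s) := fun τ => rpow_nonneg (norm_nonneg _) _
  -- localized case A
  have hA : ‖η‖ ≤ t / 2 * ‖ξ‖ →
      (2:ℝ)/125 * (t * (t * ‖ξ‖) ^ (2 * s)) ≤ ∫ τ in (9 * t / 10)..t, ‖τ • ξ - η‖ ^ (2 * s) := by
    intro hη
    have hab : 9 * t / 10 ≤ t := by linarith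
    have key : (t - 9 * t / 10) * ((2/5 * (t * ‖ξ‖)) ^ (2 * s)) ≤
        ∫ τ in (9 * t / 10)..t, ‖τ • ξ - η‖ ^ (2 * s) := by
      apply const_le_integral hab (hint _ _)
      intro x hx
      have h1 : 2/5 * (t * ‖ξ‖) ≤ ‖x • ξ - η‖ := by
        have h2 : ‖x • ξ‖ - ‖η‖ ≤ ‖x • ξ - η‖ := norm_sub_norm_le _ _
        have h3 : ‖x • ξ‖ = |x| * ‖ξ‖ := by rw [norm_smul]; rfl
        have hx0 : 0 ≤ x := le_trans (by linarith) hx.1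
        rw [h3, abs_of_nonneg hx0] at h2
        nlinarith [hx.1, norm_nonneg ξ]
      exact Real.rpow_le_rpow (by positivity) h1 h2s0
    refine le_trans ?_ key
    rw [Real.mul_rpow (by norm_num) (by positivity : (0:ℝ) ≤ t * ‖ξ‖)] at *
    have hb : ((2:ℝ)/5) ^ (2:ℝ) ≤ (2/5 : ℝ) ^ (2 * s) :=
      Real.rpow_le_rpow_of_exponent_ge (by norm_num) (by norm_num) h2s2
    rw [Real.rpow_two] at hb
    norm_num at hb
    have hAnn : (0:ℝ) ≤ (t * ‖ξ‖) ^ (2 * s) := rpow_nonneg (by positivity) _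
    have h4 : (4:ℝ)/25 * (t * ‖ξ‖) ^ (2 * s) ≤ (2/5 : ℝ) ^ (2 * s) * (t * ‖ξ‖) ^ (2 * s) :=
      mul_le_mul_of_nonneg_right hb hAnn
    nlinarith [mul_le_mul_of_nonneg_left h4 (by linarith : (0:ℝ) ≤ t / 10)]
  -- localized case B
  have hB : t / 2 * ‖ξ‖ ≤ ‖η‖ →
      (8:ℝ)/125 * (t * ‖η‖ ^ (2 * s)) ≤ ∫ τ in (0:ℝ)..(t / 10), ‖τ • ξ - η‖ ^ (2 * s) := by
    intro hη
    have hab : (0:ℝ) ≤ t / 10 := by linarith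
    have key : (t / 10 - 0) * ((4/5 * ‖η‖) ^ (2 * s)) ≤
        ∫ τ in (0:ℝ)..(t / 10), ‖τ • ξ - η‖ ^ (2 * s) := by
      apply const_le_integral hab (hint _ _)
      intro x hx
      have h1 : 4/5 * ‖η‖ ≤ ‖x • ξ - η‖ := by
        have h2 : ‖η‖ - ‖x • ξ‖ ≤ ‖η - x • ξ‖ := norm_sub_norm_le _ _
        rw [norm_sub_rev] at h2
        have h3 : ‖x • ξ‖ = |x| * ‖ξ‖ := by rw [norm_smul]; rfl
        rw [h3, abs_of_nonneg hx.1] at h2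
        nlinarith [hx.2, norm_nonneg ξ, hx.1, mul_le_mul_of_nonneg_right hx.2 (norm_nonneg ξ)]
      exact Real.rpow_le_rpow (by positivity) h1 h2s0
    refine le_trans ?_ key
    rw [Real.mul_rpow (by norm_num) (norm_nonneg η)] at key ⊢
    have hb : ((4:ℝ)/5) ^ (2:ℝ) ≤ (4/5 : ℝ) ^ (2 * s) :=
      Real.rpow_le_rpow_of_exponent_ge (by norm_num) (by norm_num) h2s2
    rw [Real.rpow_two] at hb
    norm_num at hb
    have hAnn : (0:ℝ) ≤ ‖η‖ ^ (2 * s) := rpow_nonneg (norm_nonneg _) _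
    have h4 : (16:ℝ)/25 * ‖η‖ ^ (2 * s) ≤ (4/5 : ℝ) ^ (2 * s) * ‖η‖ ^ (2 * s) :=
      mul_le_mul_of_nonneg_right hb hAnn
    nlinarith [mul_le_mul_of_nonneg_left h4 (by linarith : (0:ℝ) ≤ t / 10)]
  refine ⟨?_, fun h => le_trans (by nlinarith [rpow_nonneg (mul_nonneg ht.le (norm_nonneg ξ)) (2*s)]) (hA h), fun h => le_trans (by nlinarith [rpow_nonneg (norm_nonneg η) (2*s)]) (hB h)⟩
  -- main estimate
  rcases le_total ‖η‖ (t / 2 * ‖ξ‖) with hcase | hcase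
  · have hsub : (∫ τ in (9 * t / 10)..t, ‖τ • ξ - η‖ ^ (2 * s)) ≤
        ∫ τ in (0:ℝ)..t, ‖τ • ξ - η‖ ^ (2 * s) :=
      intervalIntegral.integral_mono_interval (by linarith) (by linarith) le_rfl
        (Filter.Eventually.of_forall fun x => hnn x) (hint 0 t)
    refine le_trans ?_ (le_trans (hA hcase) hsub)
    -- (‖η‖ + t‖ξ‖)^{2s} ≤ (9/4)(t‖ξ‖)^{2s}
    have h1 : ‖η‖ + t * ‖ξ‖ ≤ 3/2 * (t * ‖ξ‖) := by nlinarith [norm_nonneg ξ]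
    have h2 : (‖η‖ + t * ‖ξ‖) ^ (2 * s) ≤ (3/2 * (t * ‖ξ‖)) ^ (2 * s) :=
      Real.rpow_le_rpow (by positivity) h1 h2s0
    rw [Real.mul_rpow (by norm_num) (by positivity)] at h2
    have hb : ((3:ℝ)/2) ^ (2 * s) ≤ (3/2 : ℝ) ^ (2:ℝ) :=
      Real.rpow_le_rpow_of_exponent_le (by norm_num) h2s2
    rw [Real.rpow_two] at hb
    norm_num at hb
    have hAnn : (0:ℝ) ≤ (t * ‖ξ‖) ^ (2 * s) := rpow_nonneg (by positivity) _
    have h3 : (‖η‖ + t * ‖ξ‖) ^ (2 * s) ≤ 9/4 * (t * ‖ξ‖) ^ (2 * s) :=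
      le_trans h2 (mul_le_mul_of_nonneg_right hb hAnn)
    nlinarith [mul_le_mul_of_nonneg_left h3 ht.le]
  · have hsub : (∫ τ in (0:ℝ)..(t / 10), ‖τ • ξ - η‖ ^ (2 * s)) ≤
        ∫ τ in (0:ℝ)..t, ‖τ • ξ - η‖ ^ (2 * s) :=
      intervalIntegral.integral_mono_interval le_rfl (by linarith) (by linarith)
        (Filter.Eventually.of_forall fun x => hnn x) (hint 0 t)
    refine le_trans ?_ (le_trans (hB hcase) hsub)
    have h1 : ‖η‖ + t * ‖ξ‖ ≤ 3 * ‖η‖ := by nlinarith [norm_nonneg ξ]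
    have h2 : (‖η‖ + t * ‖ξ‖) ^ (2 * s) ≤ (3 * ‖η‖) ^ (2 * s) :=
      Real.rpow_le_rpow (by positivity) h1 h2s0
    rw [Real.mul_rpow (by norm_num) (norm_nonneg _)] at h2
    have hb : ((3:ℝ)) ^ (2 * s) ≤ (3 : ℝ) ^ (2:ℝ) :=
      Real.rpow_le_rpow_of_exponent_le (by norm_num) h2s2
    rw [Real.rpow_two] at hb
    norm_num at hb
    have hAnn : (0:ℝ) ≤ ‖η‖ ^ (2 * s) := rpow_nonneg (norm_nonneg _) _
    have h3 : (‖η‖ + t * ‖ξ‖) ^ (2 * s) ≤ 9 * ‖η‖ ^ (2 * s) :=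
      le_trans h2 (mul_le_mul_of_nonneg_right hb hAnn)
    nlinarith [mul_le_mul_of_nonneg_left h3 ht.le]
end

section
/- For t ∈ (0,1], σ > 0 and the kernel bound structure K(t,τ) = t^{-1}(t/τ)^{σ} for 0 < t < τ and K(t,τ) = t^{-1/2}τ^{-1/2} for 0 < τ < t: the Duhamel integral satisfies ∫₀ᵗ K(t-τ, τ) dτ ≤ C (depending only on σ ∈ (0,1)), uniformly in t ∈ (0,1]. -/
open MeasureTheory Real Set

/-- Uniform-in-time integrability of the singular Duhamel kernel bound: for `σ ∈ (0,1)`,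
`∫₀ᵗ K(t-τ, τ) dτ ≤ C` uniformly in `t ∈ (0,1]`, where `K(u,τ) = u^{-1}(u/τ)^σ` for
`u < τ` and `K(u,τ) = u^{-1/2} τ^{-1/2}` for `τ < u`. -/
theorem stmt19 (σ : ℝ) (hσ : σ ∈ Set.Ioo (0:ℝ) 1) :
    ∃ C : ℝ, 0 < C ∧ ∀ t ∈ Set.Ioc (0:ℝ) 1,
      (∫ τ in Set.Ioo (0:ℝ) t,
          if t - τ < τ then (t - τ)⁻¹ * ((t - τ) / τ) ^ σ
          else (t - τ) ^ (-(1:ℝ) / 2) * τ ^ (-(1:ℝ) / 2)) ≤ C := by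
  obtain ⟨hσ0, hσ1⟩ := hσ
  refine ⟨2 * 2 ^ ((1:ℝ)/2) + 2 ^ σ / σ, by positivity, ?_⟩
  rintro t ⟨ht0, ht1⟩
  have ht2 : (0:ℝ) < t / 2 := by linarith
  set g : ℝ → ℝ := fun τ =>
    (t/2) ^ (-(1:ℝ)/2) * τ ^ (-(1:ℝ)/2) + (t/2) ^ (-σ) * (t - τ) ^ (σ - 1) with hg
  -- integrability of the two pieces of g on Ioo 0 t
  have h1 : IntegrableOn (fun τ : ℝ => τ ^ (-(1:ℝ)/2)) (Ioo 0 t) := by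
    have := intervalIntegral.intervalIntegrable_rpow' (a := 0) (b := t)
      (by norm_num : (-1:ℝ) < -(1:ℝ)/2)
    rw [intervalIntegrable_iff_integrableOn_Ioo_of_le ht0.le] at this
    exact this
  have h2 : IntegrableOn (fun τ : ℝ => (t - τ) ^ (σ - 1)) (Ioo 0 t) := by
    have h := (intervalIntegral.intervalIntegrable_rpow' (a := 0) (b := t)
      (by linarith : (-1:ℝ) < σ - 1)).comp_sub_left t
    simp only [sub_zero, sub_self] at h
    replace h := h.symm
    rw [intervalIntegrable_iff_integrableOn_Ioo_of_le ht0.le] at h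
    exact h
  have hint1 : IntegrableOn (fun τ : ℝ => (t/2) ^ (-(1:ℝ)/2) * τ ^ (-(1:ℝ)/2)) (Ioo 0 t) :=
    h1.const_mul _
  have hint2 : IntegrableOn (fun τ : ℝ => (t/2) ^ (-σ) * (t - τ) ^ (σ - 1)) (Ioo 0 t) :=
    h2.const_mul _
  have hgint : IntegrableOn g (Ioo 0 t) := hint1.add hint2
  -- pointwise bounds
  have hf0 : (0:ℝ → ℝ) ≤ᵐ[volume.restrict (Ioo 0 t)] fun τ =>
      if t - τ < τ then (t - τ)⁻¹ * ((t - τ) / τ) ^ σ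
      else (t - τ) ^ (-(1:ℝ) / 2) * τ ^ (-(1:ℝ) / 2) := by
    refine (ae_restrict_iff' measurableSet_Ioo).2 (Filter.Eventually.of_forall fun τ hτ => ?_)
    have hu : 0 < t - τ := sub_pos.2 hτ.2
    by_cases h : t - τ < τ <;> simp only [h, if_true, if_false, Pi.zero_apply]
    · exact mul_nonneg (inv_nonneg.2 hu.le) (Real.rpow_nonneg (div_nonneg hu.le hτ.1.le) _)
    · exact mul_nonneg (Real.rpow_nonneg hu.le _) (Real.rpow_nonneg hτ.1.le _)
  have hfg : (fun τ => if t - τ < τ then (t - τ)⁻¹ * ((t - τ) / τ) ^ σ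
      else (t - τ) ^ (-(1:ℝ) / 2) * τ ^ (-(1:ℝ) / 2))
      ≤ᵐ[volume.restrict (Ioo 0 t)] g := by
    refine (ae_restrict_iff' measurableSet_Ioo).2 (Filter.Eventually.of_forall fun τ hτ => ?_)
    have hτ0 : 0 < τ := hτ.1
    have hu : 0 < t - τ := sub_pos.2 hτ.2
    have hA : 0 ≤ (t/2) ^ (-(1:ℝ)/2) * τ ^ (-(1:ℝ)/2) :=
      mul_nonneg (Real.rpow_nonneg ht2.le _) (Real.rpow_nonneg hτ0.le _)
    have hB : 0 ≤ (t/2) ^ (-σ) * (t - τ) ^ (σ - 1) :=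
      mul_nonneg (Real.rpow_nonneg ht2.le _) (Real.rpow_nonneg hu.le _)
    by_cases h : t - τ < τ <;> simp only [h, if_true, if_false, hg]
    · -- τ > t/2, bound by second term
      have hkey : (t - τ)⁻¹ * ((t - τ) / τ) ^ σ = (t - τ) ^ (σ - 1) * τ ^ (-σ) := by
        rw [Real.div_rpow hu.le hτ0.le, Real.rpow_sub hu, Real.rpow_one,
          Real.rpow_neg hτ0.le]
        ring
      rw [hkey]
      have hτhalf : t / 2 ≤ τ := by linarith
      have : τ ^ (-σ) ≤ (t/2) ^ (-σ) :=
        Real.rpow_le_rpow_of_nonpos ht2 hτhalf (by linarith)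
      calc (t - τ) ^ (σ - 1) * τ ^ (-σ)
          ≤ (t - τ) ^ (σ - 1) * (t/2) ^ (-σ) :=
            mul_le_mul_of_nonneg_left this (Real.rpow_nonneg hu.le _)
        _ = (t/2) ^ (-σ) * (t - τ) ^ (σ - 1) := by ring
        _ ≤ _ := le_add_of_nonneg_left hA
    · -- τ ≤ t/2, bound by first term
      have huhalf : t / 2 ≤ t - τ := by linarith [not_lt.1 h]
      have : (t - τ) ^ (-(1:ℝ)/2) ≤ (t/2) ^ (-(1:ℝ)/2) :=
        Real.rpow_le_rpow_of_nonpos ht2 huhalf (by norm_num)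
      calc (t - τ) ^ (-(1:ℝ)/2) * τ ^ (-(1:ℝ)/2)
          ≤ (t/2) ^ (-(1:ℝ)/2) * τ ^ (-(1:ℝ)/2) :=
            mul_le_mul_of_nonneg_right this (Real.rpow_nonneg hτ0.le _)
        _ ≤ _ := le_add_of_nonneg_right hB
  refine le_trans (integral_mono_of_nonneg hf0 hgint hfg) (le_of_eq ?_)
  -- compute ∫ g
  have conv : ∀ f : ℝ → ℝ, ∫ τ in Ioo (0:ℝ) t, f τ = ∫ τ in (0:ℝ)..t, f τ := fun f => by
    rw [intervalIntegral.integral_of_le ht0.le, integral_Ioc_eq_integral_Ioo]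
  have htpow : t ^ ((1:ℝ)/2) ≠ 0 := (Real.rpow_pos_of_pos ht0 _).ne'
  have htσ : t ^ σ ≠ 0 := (Real.rpow_pos_of_pos ht0 _).ne'
  have h2pow : (2:ℝ) ^ ((1:ℝ)/2) ≠ 0 := (Real.rpow_pos_of_pos two_pos _).ne'
  have h2σ : (2:ℝ) ^ σ ≠ 0 := (Real.rpow_pos_of_pos two_pos _).ne'
  have I1 : ∫ τ in Ioo (0:ℝ) t, τ ^ (-(1:ℝ)/2) = 2 * t ^ ((1:ℝ)/2) := by
    rw [conv, integral_rpow (Or.inl (by norm_num))]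
    rw [Real.zero_rpow (by norm_num)]
    norm_num
    ring
  have I2 : ∫ τ in Ioo (0:ℝ) t, (t - τ) ^ (σ - 1) = t ^ σ / σ := by
    rw [conv]
    rw [intervalIntegral.integral_comp_sub_left (fun x => x ^ (σ - 1)) t]
    rw [sub_self, sub_zero, integral_rpow (Or.inl (by linarith))]
    rw [Real.zero_rpow (by linarith : σ - 1 + 1 ≠ 0)]
    norm_num
  have e1 : (t/2) ^ (-(1:ℝ)/2) * (2 * t ^ ((1:ℝ)/2)) = 2 * 2 ^ ((1:ℝ)/2) := by
    rw [show (-(1:ℝ)/2) = -((1:ℝ)/2) by ring, Real.rpow_neg (by positivity),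
      Real.div_rpow ht0.le (by norm_num)]
    field_simp
  have e2 : (t/2) ^ (-σ) * (t ^ σ / σ) = 2 ^ σ / σ := by
    rw [Real.rpow_neg (by positivity), Real.div_rpow ht0.le (by norm_num)]
    field_simp
  rw [integral_add hint1 hint2, integral_const_mul, integral_const_mul, I1, I2, e1, e2]
end
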